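/- For covectors r₁, r₂, r₃, ... in a module where the infinite sums s_j := ∑_{i=0}^∞ r_{j+i} z^{-i} converge (e.g. finitely supported or in a suitable topological module), the identity ⋀_{j=1}^{n} s_j = r₁ ∧ r₂ ∧ ⋯ ∧ r_{n-1} ∧ s_n holds; equivalently, in ⋀_{j=1}^n (∑_{i=0}^∞ r_{j+i} z^{-i}) all but the leading term of each of the first n−1 factors cancels. -/

import Mathlib

lemma tail_rec (R : Type*) [CommRing R] (M : Type*) [AddCommGroup M] [Module R M]
    (r : ℕ → M) (N : ℕ) (hr : ∀ k, N ≤ k → r k = 0) (ζ : R) (j : ℕ) (hj : 1 ≤ j) :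
    (∑ k ∈ Finset.range N, ζ ^ k • r (j + k)) =
      r j + ζ • ∑ k ∈ Finset.range N, ζ ^ k • r (j + 1 + k) := by
  cases N with
  | zero =>
      simp [hr j (Nat.zero_le j)]
  | succ N' =>
      rw [Finset.sum_range_succ' (fun k => ζ ^ k • r (j + k))]
      rw [Finset.smul_sum, Finset.sum_range_succ]
      have h0 : r (j + 1 + N') = 0 := hr _ (by omega)
      simp only [h0, smul_zero, add_zero, pow_zero, one_smul, add_zero]
      rw [add_comm]
      congr 1
      apply Finset.sum_congr rfl
      intro k _
      rw [smul_smul, ← pow_succ']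
      congr 2
      omega

/-- For covectors `r₁, r₂, …` (finitely supported: `r_k = 0` for `k ≥ N`) and tails
`s_j := ∑_{i=0}^∞ r_{j+i} ζ^i` (with `ζ` playing the role of `z⁻¹`; the sums are
finite by the support assumption), the wedge identity
`⋀_{j=1}^{n+1} s_j = r₁ ∧ r₂ ∧ ⋯ ∧ r_n ∧ s_{n+1}` holds in the exterior algebra. -/
theorem stmt_14 (R : Type*) [CommRing R] (M : Type*) [AddCommGroup M] [Module R M]
    (r : ℕ → M) (N : ℕ) (hr : ∀ k, N ≤ k → r k = 0) (ζ : R) (n : ℕ) :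
    (List.ofFn fun i : Fin (n + 1) =>
      ExteriorAlgebra.ι R (∑ k ∈ Finset.range N, ζ ^ k • r ((i : ℕ) + 1 + k))).prod =
    (List.ofFn fun i : Fin n => ExteriorAlgebra.ι R (r ((i : ℕ) + 1))).prod *
      ExteriorAlgebra.ι R (∑ k ∈ Finset.range N, ζ ^ k • r (n + 1 + k)) := by
  induction n with
  | zero => simp
  | succ n ih =>
      rw [List.ofFn_succ' (fun i : Fin (n + 2) =>
        ExteriorAlgebra.ι R (∑ k ∈ Finset.range N, ζ ^ k • r ((i : ℕ) + 1 + k)))]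
      rw [List.ofFn_succ' (fun i : Fin (n + 1) =>
        ExteriorAlgebra.ι R (r ((i : ℕ) + 1)))]
      simp only [List.concat_eq_append, List.prod_append, List.prod_cons, List.prod_nil,
        Fin.coe_castSucc, Fin.val_last, mul_one]
      rw [ih, mul_assoc, mul_assoc]
      congr 1
      have hs : (∑ k ∈ Finset.range N, ζ ^ k • r (n + 1 + k)) =
          r (n + 1) + ζ • ∑ k ∈ Finset.range N, ζ ^ k • r (n + 1 + 1 + k) :=
        tail_rec R M r N hr ζ (n + 1) (by omega)
      rw [hs, map_add, add_mul, map_smul, smul_mul_assoc,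
        ExteriorAlgebra.ι_sq_zero, smul_zero, add_zero]
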